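/- Fix g > 0 and J with 2gJ/√π > 1. Then there exists a critical noise value σ_c = √((4g²J²/π − 1))/g > 0 such that the equation μ = erf(gJμ/√(1+g²σ²)) has three solutions for 0 ≤ σ < σ_c and a unique solution μ = 0 for σ ≥ σ_c. -/
import Mathlib


open Real

set_option maxHeartbeats 1000000

/-- The Gauss error function. -/
noncomputable def erf (x : ℝ) : ℝ := (2 / Real.sqrt π) * ∫ t in (0:ℝ)..x, Real.exp (-t^2)

lemma expsq_cont : Continuous fun t : ℝ => Real.exp (-t^2) := by continuity

lemma expsq_ii (a b : ℝ) : IntervalIntegrable (fun t : ℝ => Real.exp (-t^2)) MeasureTheory.volume a b :=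
  expsq_cont.intervalIntegrable a b

lemma erf_continuous : Continuous erf := by
  unfold erf
  exact continuous_const.mul (intervalIntegral.continuous_primitive (fun a b => expsq_ii a b) 0)

lemma erf_zero : erf 0 = 0 := by simp [erf]

lemma erf_neg (x : ℝ) : erf (-x) = - erf x := by
  unfold erf
  have h := intervalIntegral.integral_comp_neg (a := (0:ℝ)) (b := x)
    (f := fun t : ℝ => Real.exp (-t^2))
  simp only [neg_sq, neg_zero] at h
  have h2 : (∫ t in (0:ℝ)..(-x), Real.exp (-t^2)) = -∫ t in (-x)..(0:ℝ), Real.exp (-t^2) :=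
    intervalIntegral.integral_symm (-x) 0
  rw [h2, ← h]; ring

lemma int_lt_self {x : ℝ} (hx : 0 < x) : (∫ t in (0:ℝ)..x, Real.exp (-t^2)) < x := by
  have h := intervalIntegral.integral_lt_integral_of_continuousOn_of_le_of_exists_lt
    (f := fun t : ℝ => Real.exp (-t^2)) (g := fun _ : ℝ => (1:ℝ)) hx
    (expsq_cont.continuousOn) continuousOn_const
    (fun t ht => by
      have : -t^2 ≤ 0 := by nlinarith [ht.1]
      simpa using Real.exp_le_one_iff.mpr this)
    ⟨x, ⟨hx.le, le_refl x⟩, by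
      have : -x^2 < 0 := by nlinarith
      simpa using Real.exp_lt_one_iff.mpr this⟩
  simpa using h

lemma int_ge {y : ℝ} (hy : 0 ≤ y) :
    y * Real.exp (-y^2) ≤ ∫ t in (0:ℝ)..y, Real.exp (-t^2) := by
  have h := intervalIntegral.integral_mono_on (μ := MeasureTheory.volume)
    (f := fun _ : ℝ => Real.exp (-y^2)) (g := fun t : ℝ => Real.exp (-t^2)) hy
    (intervalIntegrable_const) (expsq_ii 0 y)
    (fun t ht => Real.exp_le_exp.mpr (by nlinarith [ht.1, ht.2]))
  simpa using h

lemma int_le_half_sqrt_pi {y : ℝ} (hy : 0 ≤ y) :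
    (∫ t in (0:ℝ)..y, Real.exp (-t^2)) ≤ Real.sqrt π / 2 := by
  have hgauss : (∫ t in Set.Ioi (0:ℝ), Real.exp (-(1:ℝ) * t^2)) = Real.sqrt π / 2 := by
    rw [integral_gaussian_Ioi]; norm_num
  rw [intervalIntegral.integral_of_le hy]
  calc (∫ t in Set.Ioc (0:ℝ) y, Real.exp (-t^2))
      ≤ ∫ t in Set.Ioi (0:ℝ), Real.exp (-t^2) := by
        apply MeasureTheory.setIntegral_mono_set
        · have := (integrable_exp_neg_mul_sq (b := (1:ℝ)) one_pos).integrableOn (s := Set.Ioi (0:ℝ))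
          simpa using this
        · exact Filter.Eventually.of_forall fun t => (Real.exp_pos _).le
        · exact MeasureTheory.ae_of_all _ fun t ht => ht.1
    _ = Real.sqrt π / 2 := by simpa using hgauss

lemma key_strict {y₁ y₂ : ℝ} (h1 : 0 < y₁) (h2 : y₁ < y₂) :
    y₁ * (∫ t in (0:ℝ)..y₂, Real.exp (-t^2)) < y₂ * ∫ t in (0:ℝ)..y₁, Real.exp (-t^2) := by
  have hsplit : (∫ t in (0:ℝ)..y₂, Real.exp (-t^2))
      = (∫ t in (0:ℝ)..y₁, Real.exp (-t^2)) + ∫ t in y₁..y₂, Real.exp (-t^2) :=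
    (intervalIntegral.integral_add_adjacent_intervals (expsq_ii 0 y₁) (expsq_ii y₁ y₂)).symm
  have hupper : (∫ t in y₁..y₂, Real.exp (-t^2)) ≤ (y₂ - y₁) * Real.exp (-y₁^2) := by
    have h := intervalIntegral.integral_mono_on (μ := MeasureTheory.volume)
      (f := fun t : ℝ => Real.exp (-t^2)) (g := fun _ : ℝ => Real.exp (-y₁^2)) h2.le
      (expsq_ii y₁ y₂) intervalIntegrable_const
      (fun t ht => Real.exp_le_exp.mpr (by nlinarith [ht.1, ht.2, h1]))
    simpa [smul_eq_mul, mul_comm] using h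
  have hstrict : y₁ * Real.exp (-y₁^2) < ∫ t in (0:ℝ)..y₁, Real.exp (-t^2) := by
    have h := intervalIntegral.integral_lt_integral_of_continuousOn_of_le_of_exists_lt
      (f := fun _ : ℝ => Real.exp (-y₁^2)) (g := fun t : ℝ => Real.exp (-t^2)) h1
      continuousOn_const expsq_cont.continuousOn
      (fun t ht => Real.exp_le_exp.mpr (by nlinarith [ht.1, ht.2]))
      ⟨0, ⟨le_refl 0, h1.le⟩, by
        have : -y₁^2 < -(0:ℝ)^2 := by nlinarith
        exact Real.exp_lt_exp.mpr (by simpa using this)⟩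
    simpa [smul_eq_mul, mul_comm] using h
  nlinarith [hstrict, hupper, h1, h2]

/-- Noise-induced pitchfork: for `2gJ/√π > 1` there is a critical noise `σ_c = √(4g²J²/π − 1)/g`
such that `μ = erf(gJμ/√(1+g²σ²))` has three solutions for `0 ≤ σ < σ_c` and only the trivial
solution for `σ ≥ σ_c`. -/
theorem critical_noise_value (g J : ℝ) (hg : 0 < g) (hJ : 0 < J)
    (h : 1 < 2 * g * J / Real.sqrt π) :
    ∃ σc : ℝ, σc = Real.sqrt (4 * g ^ 2 * J ^ 2 / π - 1) / g ∧ 0 < σc ∧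
      ∀ σ : ℝ, 0 ≤ σ →
        ((σ < σc → ∃ μs > (0:ℝ),
            {μ : ℝ | μ = erf (g * J * μ / Real.sqrt (1 + g ^ 2 * σ ^ 2))} = {-μs, 0, μs}) ∧
         (σc ≤ σ →
            ∀ μ : ℝ, μ = erf (g * J * μ / Real.sqrt (1 + g ^ 2 * σ ^ 2)) → μ = 0)) := by
  have hπ : 0 < π := pi_pos
  have hsπ : 0 < Real.sqrt π := Real.sqrt_pos.mpr hπ
  have hπsq : Real.sqrt π ^ 2 = π := Real.sq_sqrt hπ.le
  have hb : Real.sqrt π < 2 * g * J := by rwa [lt_div_iff₀ hsπ, one_mul] at h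
  have hX : 0 < 4 * g ^ 2 * J ^ 2 / π - 1 := by
    rw [sub_pos, lt_div_iff₀ hπ, one_mul]
    nlinarith
  set X := 4 * g ^ 2 * J ^ 2 / π - 1 with hXdef
  clear_value X
  have hXsq : Real.sqrt X ^ 2 = X := Real.sq_sqrt hX.le
  have hσc0 : 0 < Real.sqrt X / g := by positivity
  refine ⟨Real.sqrt X / g, rfl, hσc0, ?_⟩
  intro σ hσ
  set s := Real.sqrt (1 + g ^ 2 * σ ^ 2) with hsdef
  clear_value s
  have hs0 : 0 < s := by rw [hsdef]; exact Real.sqrt_pos.mpr (by nlinarith)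
  have hssq : s ^ 2 = 1 + g ^ 2 * σ ^ 2 := by rw [hsdef]; exact Real.sq_sqrt (by nlinarith)
  set a := g * J / s with hadef
  clear_value a
  have ha : 0 < a := by rw [hadef]; positivity
  have harg : ∀ μ : ℝ, g * J * μ / s = a * μ := fun μ => by rw [hadef]; ring
  -- single positive root implies zero, under slope ≤ 1
  have pos_uniq_zero : 2 * g * J ≤ Real.sqrt π * s →
      ∀ μ : ℝ, 0 < μ → μ = erf (a * μ) → False := by
    intro hsl μ hμ0 hμ
    have h2a : 2 * a ≤ Real.sqrt π := by
      rw [hadef, ← mul_div_assoc, div_le_iff₀ hs0]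
      nlinarith
    have hI : (∫ t in (0:ℝ)..(a * μ), Real.exp (-t ^ 2)) < a * μ :=
      int_lt_self (by positivity)
    rw [erf, div_mul_eq_mul_div, eq_div_iff hsπ.ne'] at hμ
    nlinarith
  constructor
  · -- three solutions
    intro hσlt
    have hσsq : σ ^ 2 < X / g ^ 2 := by
      calc σ ^ 2 < (Real.sqrt X / g) ^ 2 := pow_lt_pow_left₀ hσlt hσ two_ne_zero
        _ = X / g ^ 2 := by rw [div_pow, hXsq]
    have hgsσ : g ^ 2 * σ ^ 2 < X := by
      rw [lt_div_iff₀ (by positivity)] at hσsq; nlinarith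
    have hslope : Real.sqrt π * s < 2 * g * J := by
      have hsq : (Real.sqrt π * s) ^ 2 < (2 * g * J) ^ 2 := by
        rw [mul_pow, hπsq, hssq]
        have : π * (1 + g ^ 2 * σ ^ 2) < π * (1 + X) := by
          apply mul_lt_mul_of_pos_left (by linarith) hπ
        calc π * (1 + g ^ 2 * σ ^ 2) < π * (1 + X) := this
          _ = (2 * g * J) ^ 2 := by rw [hXdef]; field_simp; ring
      exact lt_of_pow_lt_pow_left₀ 2 (by positivity) hsq
    have hca : 1 < 2 / Real.sqrt π * a := by
      rw [hadef, div_mul_div_comm, lt_div_iff₀ (by positivity), one_mul]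
      nlinarith
    -- find ε with slope margin
    have hφ : Continuous fun t : ℝ => 2 / Real.sqrt π * a * Real.exp (-(a * t) ^ 2) :=
      continuous_const.mul
        (Real.continuous_exp.comp ((continuous_const.mul continuous_id).pow 2).neg)
    have h0 : 1 < 2 / Real.sqrt π * a * Real.exp (-(a * (0:ℝ)) ^ 2) := by simpa using hca
    have hev := (hφ.tendsto 0).eventually_const_lt h0
    rw [Metric.eventually_nhds_iff] at hev
    obtain ⟨δ, hδ, hδ'⟩ := hev
    obtain ⟨ε, hε0, hεδ, hε1⟩ : ∃ ε : ℝ, 0 < ε ∧ ε < δ ∧ ε ≤ 1 :=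
      ⟨min (δ / 2) 1, lt_min (by linarith) one_pos,
        lt_of_le_of_lt (min_le_left _ _) (by linarith), min_le_right _ _⟩
    have hφε : 1 < 2 / Real.sqrt π * a * Real.exp (-(a * ε) ^ 2) := by
      apply hδ'
      rw [Real.dist_eq, sub_zero, abs_of_pos hε0]
      exact hεδ
    -- F ε > 0
    have hFε : 0 < erf (a * ε) - ε := by
      have hge := int_ge (y := a * ε) (by positivity)
      rw [erf]
      have h2 : 2 / Real.sqrt π * ((a * ε) * Real.exp (-(a * ε) ^ 2))
          ≤ 2 / Real.sqrt π * ∫ t in (0:ℝ)..(a * ε), Real.exp (-t ^ 2) :=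
        mul_le_mul_of_nonneg_left hge (by positivity)
      nlinarith
    -- F 2 < 0
    have hF2 : erf (a * 2) - 2 < 0 := by
      have hle := int_le_half_sqrt_pi (y := a * 2) (by positivity)
      rw [erf]
      have h2 : 2 / Real.sqrt π * ∫ t in (0:ℝ)..(a * 2), Real.exp (-t ^ 2)
          ≤ 2 / Real.sqrt π * (Real.sqrt π / 2) :=
        mul_le_mul_of_nonneg_left hle (by positivity)
      have : 2 / Real.sqrt π * (Real.sqrt π / 2) = 1 := by field_simp
      nlinarith
    -- IVT
    have hcontF : ContinuousOn (fun μ : ℝ => erf (a * μ) - μ) (Set.Icc ε 2) :=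
      ((erf_continuous.comp (continuous_const.mul continuous_id)).sub continuous_id).continuousOn
    have hsub := intermediate_value_Icc' (by linarith : ε ≤ (2:ℝ)) hcontF
    have hmem : (0:ℝ) ∈ Set.Icc (erf (a * 2) - 2) (erf (a * ε) - ε) :=
      ⟨hF2.le, hFε.le⟩
    obtain ⟨μs, hμsmem, hFμs⟩ := hsub hmem
    have hμs0 : 0 < μs := lt_of_lt_of_le hε0 hμsmem.1
    have hroot : μs = erf (a * μs) := by
      have := sub_eq_zero.mp hFμs
      linarith [this.symm.le, this.le]
    -- uniqueness of positive roots
    have uniq : ∀ μ : ℝ, 0 < μ → μ = erf (a * μ) → μ = μs := by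
      have key : ∀ μ₁ μ₂ : ℝ, 0 < μ₁ → μ₁ < μ₂ →
          μ₁ = erf (a * μ₁) → μ₂ = erf (a * μ₂) → False := by
        intro μ₁ μ₂ h1 h12 e1 e2
        have hy := key_strict (y₁ := a * μ₁) (y₂ := a * μ₂) (by positivity)
          (by nlinarith)
        rw [erf, div_mul_eq_mul_div, eq_div_iff hsπ.ne'] at e1 e2
        have k1 : a * μ₁ * (μ₂ * Real.sqrt π)
            = a * μ₁ * (2 * ∫ t in (0:ℝ)..(a * μ₂), Real.exp (-t ^ 2)) := by rw [e2]
        have k2 : a * μ₂ * (μ₁ * Real.sqrt π)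
            = a * μ₂ * (2 * ∫ t in (0:ℝ)..(a * μ₁), Real.exp (-t ^ 2)) := by rw [e1]
        nlinarith [k1, k2, hy]
      intro μ hμ0 hμ
      rcases lt_trichotomy μ μs with hlt | heq | hgt
      · exact absurd (key μ μs hμ0 hlt hμ hroot) (by simp)
      · exact heq
      · exact absurd (key μs μ hμs0 hgt hroot hμ) (by simp)
    refine ⟨μs, hμs0, ?_⟩
    ext μ
    simp only [Set.mem_setOf_eq, Set.mem_insert_iff, Set.mem_singleton_iff]
    constructor
    · intro hμ
      rw [harg μ] at hμ
      rcases lt_trichotomy μ 0 with hlt | heq | hgt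
      · left
        have hroot' : -μ = erf (a * -μ) := by rw [mul_neg, erf_neg, ← hμ]
        have := uniq (-μ) (neg_pos.mpr hlt) hroot'
        linarith
      · right; left; exact heq
      · right; right; exact uniq μ hgt hμ
    · intro hμ
      rcases hμ with hμ | hμ | hμ
      · subst hμ; rw [harg, mul_neg, erf_neg, ← hroot]
      · subst hμ; rw [harg, mul_zero, erf_zero]
      · subst hμ; rw [harg, ← hroot]
  · -- unique solution
    intro hσge μ hμ
    rw [harg μ] at hμ
    have hσsq : X / g ^ 2 ≤ σ ^ 2 := by
      calc X / g ^ 2 = (Real.sqrt X / g) ^ 2 := by rw [div_pow, hXsq]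
        _ ≤ σ ^ 2 := pow_le_pow_left₀ hσc0.le hσge 2
    have hgsσ : X ≤ g ^ 2 * σ ^ 2 := by
      rw [div_le_iff₀ (by positivity)] at hσsq; nlinarith
    have hslope : 2 * g * J ≤ Real.sqrt π * s := by
      have hsq : (2 * g * J) ^ 2 ≤ (Real.sqrt π * s) ^ 2 := by
        rw [mul_pow (Real.sqrt π) s, hπsq, hssq]
        have h1 : π * (1 + X) ≤ π * (1 + g ^ 2 * σ ^ 2) :=
          mul_le_mul_of_nonneg_left (by linarith) hπ.le
        calc (2 * g * J) ^ 2 = π * (1 + X) := by rw [hXdef]; field_simp; ring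
          _ ≤ π * (1 + g ^ 2 * σ ^ 2) := h1
      exact le_of_pow_le_pow_left₀ (by norm_num) (by positivity) hsq
    by_contra hne
    rcases lt_trichotomy μ 0 with hlt | heq | hgt
    · have hroot' : -μ = erf (a * -μ) := by rw [mul_neg, erf_neg, ← hμ]
      exact pos_uniq_zero hslope (-μ) (neg_pos.mpr hlt) hroot'
    · exact hne heq
    · exact pos_uniq_zero hslope μ hgt hμ
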